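/- For every integer m ≥ 1, p ∈ (1/(m+1), 1/m), and r ∈ (0, ∞), the second derivative of p ↦ (m·p^r + (1 - m·p)^r)^(1/r) equals (r-1)·m·p^(r-2)·(1-mp)^(r-2)·(m·p^r + (1-mp)^r)^((1/r)-2); in particular, this function is strictly concave on (1/(m+1), 1/m) when r < 1 and strictly convex when r > 1. -/

import Mathlib

theorem stmt_5 (m : ℕ) (hm : 1 ≤ m) (r : ℝ) (hr : 0 < r) :
    (∀ p ∈ Set.Ioo (1 / ((m : ℝ) + 1)) (1 / (m : ℝ)),
      deriv (deriv (fun p : ℝ =>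
          ((m : ℝ) * p ^ r + (1 - (m : ℝ) * p) ^ r) ^ (1 / r))) p
        = (r - 1) * (m : ℝ) * p ^ (r - 2) * (1 - (m : ℝ) * p) ^ (r - 2)
            * ((m : ℝ) * p ^ r + (1 - (m : ℝ) * p) ^ r) ^ (1 / r - 2)) ∧
    (r < 1 → StrictConcaveOn ℝ (Set.Ioo (1 / ((m : ℝ) + 1)) (1 / (m : ℝ)))
        (fun p : ℝ => ((m : ℝ) * p ^ r + (1 - (m : ℝ) * p) ^ r) ^ (1 / r))) ∧
    (1 < r → StrictConvexOn ℝ (Set.Ioo (1 / ((m : ℝ) + 1)) (1 / (m : ℝ)))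
        (fun p : ℝ => ((m : ℝ) * p ^ r + (1 - (m : ℝ) * p) ^ r) ^ (1 / r))) := by
  have hm1 : (1:ℝ) ≤ (m:ℝ) := by exact_mod_cast hm
  have hm0 : (0:ℝ) < (m:ℝ) := by linarith
  set S := Set.Ioo (1 / ((m : ℝ) + 1)) (1 / (m : ℝ)) with hSdef
  have hSopen : IsOpen S := isOpen_Ioo
  have hp_pos : ∀ p ∈ S, 0 < p := by
    intro p hp
    have h1 : (0:ℝ) < 1 / ((m:ℝ)+1) := by positivity
    exact lt_trans h1 hp.1
  have hb_pos : ∀ p ∈ S, 0 < 1 - (m:ℝ) * p := by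
    intro p hp
    have h2 : p * (m:ℝ) < 1 := (lt_div_iff₀ hm0).mp hp.2
    nlinarith
  have hg_pos : ∀ p ∈ S, 0 < (m:ℝ) * p ^ r + (1 - (m:ℝ) * p) ^ r := by
    intro p hp
    have ha := hp_pos p hp
    have hb := hb_pos p hp
    have h1 : (0:ℝ) < p ^ r := Real.rpow_pos_of_pos ha r
    have h2 : (0:ℝ) < (1 - (m:ℝ)*p) ^ r := Real.rpow_pos_of_pos hb r
    positivity
  -- first derivative
  have hd1 : ∀ p ∈ S, HasDerivAt
      (fun p : ℝ => ((m : ℝ) * p ^ r + (1 - (m : ℝ) * p) ^ r) ^ (1 / r))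
      ((m:ℝ) * (p ^ (r-1) - (1 - (m:ℝ)*p) ^ (r-1))
        * ((m:ℝ) * p ^ r + (1 - (m:ℝ) * p) ^ r) ^ (1/r - 1)) p := by
    intro p hp
    have ha := hp_pos p hp
    have hb := hb_pos p hp
    have hg := hg_pos p hp
    have h1 : HasDerivAt (fun p : ℝ => p ^ r) (r * p ^ (r-1)) p :=
      Real.hasDerivAt_rpow_const (Or.inl ha.ne')
    have h2 : HasDerivAt (fun p : ℝ => 1 - (m:ℝ) * p) (-(m:ℝ)) p := by
      exact ((hasDerivAt_id' p).const_mul (m:ℝ)).const_sub (1:ℝ) |>.congr_deriv (by ring)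
    have h3 : HasDerivAt (fun p : ℝ => (1 - (m:ℝ)*p) ^ r)
        (r * (1 - (m:ℝ)*p) ^ (r-1) * (-(m:ℝ))) p := by
      have h := (Real.hasDerivAt_rpow_const (x := 1 - (m:ℝ)*p) (p := r) (Or.inl hb.ne')).comp p h2; exact h
    have h4 : HasDerivAt (fun p : ℝ => (m:ℝ) * p ^ r + (1 - (m:ℝ)*p) ^ r)
        ((m:ℝ) * (r * p ^ (r-1)) + r * (1 - (m:ℝ)*p) ^ (r-1) * (-(m:ℝ))) p :=
      (h1.const_mul _).add h3
    have h5 := (Real.hasDerivAt_rpow_const (p := 1/r) (Or.inl hg.ne')).comp p h4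
    refine h5.congr_deriv ?_
    field_simp
    ring
  -- second derivative
  have hd2 : ∀ p ∈ S, HasDerivAt
      (fun p : ℝ => (m:ℝ) * (p ^ (r-1) - (1 - (m:ℝ)*p) ^ (r-1))
        * ((m:ℝ) * p ^ r + (1 - (m:ℝ) * p) ^ r) ^ (1/r - 1))
      ((r - 1) * (m : ℝ) * p ^ (r - 2) * (1 - (m : ℝ) * p) ^ (r - 2)
        * ((m : ℝ) * p ^ r + (1 - (m : ℝ) * p) ^ r) ^ (1 / r - 2)) p := by
    intro p hp
    have ha := hp_pos p hp
    have hb := hb_pos p hp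
    have hg := hg_pos p hp
    have h1 : HasDerivAt (fun p : ℝ => p ^ (r-1)) ((r-1) * p ^ (r-1-1)) p :=
      Real.hasDerivAt_rpow_const (Or.inl ha.ne')
    have h2 : HasDerivAt (fun p : ℝ => 1 - (m:ℝ) * p) (-(m:ℝ)) p := by
      exact ((hasDerivAt_id' p).const_mul (m:ℝ)).const_sub (1:ℝ) |>.congr_deriv (by ring)
    have h3 : HasDerivAt (fun p : ℝ => (1 - (m:ℝ)*p) ^ (r-1))
        ((r-1) * (1 - (m:ℝ)*p) ^ (r-1-1) * (-(m:ℝ))) p := by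
      have h := (Real.hasDerivAt_rpow_const (x := 1 - (m:ℝ)*p) (p := r-1) (Or.inl hb.ne')).comp p h2; exact h
    have hu : HasDerivAt (fun p : ℝ => (m:ℝ) * (p ^ (r-1) - (1 - (m:ℝ)*p) ^ (r-1)))
        ((m:ℝ) * ((r-1) * p ^ (r-1-1) - (r-1) * (1 - (m:ℝ)*p) ^ (r-1-1) * (-(m:ℝ)))) p :=
      (h1.sub h3).const_mul _
    have h1' : HasDerivAt (fun p : ℝ => p ^ r) (r * p ^ (r-1)) p :=
      Real.hasDerivAt_rpow_const (Or.inl ha.ne')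
    have h3' : HasDerivAt (fun p : ℝ => (1 - (m:ℝ)*p) ^ r)
        (r * (1 - (m:ℝ)*p) ^ (r-1) * (-(m:ℝ))) p := by
      have h := (Real.hasDerivAt_rpow_const (x := 1 - (m:ℝ)*p) (p := r) (Or.inl hb.ne')).comp p h2; exact h
    have h4 : HasDerivAt (fun p : ℝ => (m:ℝ) * p ^ r + (1 - (m:ℝ)*p) ^ r)
        ((m:ℝ) * (r * p ^ (r-1)) + r * (1 - (m:ℝ)*p) ^ (r-1) * (-(m:ℝ))) p :=
      (h1'.const_mul _).add h3'
    have hv : HasDerivAt (fun p : ℝ => ((m:ℝ) * p ^ r + (1 - (m:ℝ)*p) ^ r) ^ (1/r - 1))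
        ((1/r - 1) * ((m:ℝ) * p ^ r + (1 - (m:ℝ)*p) ^ r) ^ (1/r - 1 - 1)
          * ((m:ℝ) * (r * p ^ (r-1)) + r * (1 - (m:ℝ)*p) ^ (r-1) * (-(m:ℝ)))) p := by
      have h := (Real.hasDerivAt_rpow_const (x := (m:ℝ) * p ^ r + (1 - (m:ℝ)*p) ^ r) (p := 1/r - 1) (Or.inl hg.ne')).comp p h4; exact h
    have hprod := hu.mul hv
    refine hprod.congr_deriv ?_
    -- algebraic identity
    have e1 : p ^ (r-1) = p ^ (r-2) * p := by
      rw [show r - 1 = (r-2) + 1 by ring, Real.rpow_add_one ha.ne']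
    have e2 : (1 - (m:ℝ)*p) ^ (r-1) = (1 - (m:ℝ)*p) ^ (r-2) * (1 - (m:ℝ)*p) := by
      rw [show r - 1 = (r-2) + 1 by ring, Real.rpow_add_one hb.ne']
    have e3 : p ^ r = p ^ (r-2) * p * p := by
      have h := Real.rpow_add_one ha.ne' (r-1)
      rw [show r - 1 + 1 = r by ring] at h
      rw [h, e1]
    have e4 : (1 - (m:ℝ)*p) ^ r = (1 - (m:ℝ)*p) ^ (r-2) * (1 - (m:ℝ)*p) * (1 - (m:ℝ)*p) := by
      have h := Real.rpow_add_one hb.ne' (r-1)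
      rw [show r - 1 + 1 = r by ring] at h
      rw [h, e2]
    have e5 : r - 1 - 1 = r - 2 := by ring
    have e6 : ((m:ℝ) * p ^ r + (1 - (m:ℝ)*p) ^ r) ^ (1/r - 1)
        = ((m:ℝ) * p ^ r + (1 - (m:ℝ)*p) ^ r) ^ (1/r - 2)
          * ((m:ℝ) * p ^ r + (1 - (m:ℝ)*p) ^ r) := by
      rw [show 1/r - 1 = (1/r - 2) + 1 by ring, Real.rpow_add_one hg.ne']
    have e7 : 1/r - 1 - 1 = 1/r - 2 := by ring
    rw [e5, e7, e6, e1, e2, e3, e4]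
    have hmp : (m:ℝ) * p + (1 - (m:ℝ)*p) = 1 := by ring
    field_simp
    ring
  have main : ∀ p ∈ S,
      deriv (deriv (fun p : ℝ =>
          ((m : ℝ) * p ^ r + (1 - (m : ℝ) * p) ^ r) ^ (1 / r))) p
        = (r - 1) * (m : ℝ) * p ^ (r - 2) * (1 - (m : ℝ) * p) ^ (r - 2)
            * ((m : ℝ) * p ^ r + (1 - (m : ℝ) * p) ^ r) ^ (1 / r - 2) := by
    intro p hp
    have hev : deriv (fun p : ℝ => ((m : ℝ) * p ^ r + (1 - (m : ℝ) * p) ^ r) ^ (1 / r))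
        =ᶠ[nhds p] (fun p : ℝ => (m:ℝ) * (p ^ (r-1) - (1 - (m:ℝ)*p) ^ (r-1))
          * ((m:ℝ) * p ^ r + (1 - (m:ℝ) * p) ^ r) ^ (1/r - 1)) := by
      filter_upwards [hSopen.mem_nhds hp] with q hq using (hd1 q hq).deriv
    rw [hev.deriv_eq]
    exact (hd2 p hp).deriv
  refine ⟨main, ?_, ?_⟩
  · -- strictly concave when r < 1
    intro hr1
    apply strictConcaveOn_of_deriv2_neg (convex_Ioo _ _)
    · -- continuity
      apply ContinuousOn.rpow_const
      · apply ContinuousOn.add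
        · exact (continuousOn_id.rpow_const fun x hx => Or.inl (hp_pos x hx).ne').const_smul (m:ℝ)
        · exact ((continuousOn_const.sub (continuousOn_id.const_smul (m:ℝ))).rpow_const
            fun x hx => Or.inl (hb_pos x hx).ne')
      · intro x hx
        exact Or.inl (hg_pos x hx).ne'
    · intro x hx
      rw [interior_Ioo] at hx
      have hx' : x ∈ S := hx
      have h := main x hx'
      rw [show deriv^[2] (fun p : ℝ => ((m : ℝ) * p ^ r + (1 - (m : ℝ) * p) ^ r) ^ (1 / r))
          = deriv (deriv (fun p : ℝ => ((m : ℝ) * p ^ r + (1 - (m : ℝ) * p) ^ r) ^ (1 / r)))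
          from rfl, h]
      have h1 : (0:ℝ) < x ^ (r-2) := Real.rpow_pos_of_pos (hp_pos x hx') _
      have h2 : (0:ℝ) < (1 - (m:ℝ)*x) ^ (r-2) := Real.rpow_pos_of_pos (hb_pos x hx') _
      have h3 : (0:ℝ) < ((m:ℝ) * x ^ r + (1 - (m:ℝ)*x) ^ r) ^ (1/r - 2) :=
        Real.rpow_pos_of_pos (hg_pos x hx') _
      have hneg : r - 1 < 0 := by linarith
      have hpos : 0 < (m:ℝ) * (x ^ (r-2) * ((1 - (m:ℝ)*x) ^ (r-2)
          * (((m:ℝ) * x ^ r + (1 - (m:ℝ)*x) ^ r) ^ (1/r - 2)))) := by positivity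
      nlinarith [mul_neg_of_neg_of_pos hneg hpos]
  · -- strictly convex when 1 < r
    intro hr1
    apply strictConvexOn_of_deriv2_pos (convex_Ioo _ _)
    · apply ContinuousOn.rpow_const
      · apply ContinuousOn.add
        · exact (continuousOn_id.rpow_const fun x hx => Or.inl (hp_pos x hx).ne').const_smul (m:ℝ)
        · exact ((continuousOn_const.sub (continuousOn_id.const_smul (m:ℝ))).rpow_const
            fun x hx => Or.inl (hb_pos x hx).ne')
      · intro x hx
        exact Or.inl (hg_pos x hx).ne'
    · intro x hx
      rw [interior_Ioo] at hx
      have hx' : x ∈ S := hx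
      have h := main x hx'
      rw [show deriv^[2] (fun p : ℝ => ((m : ℝ) * p ^ r + (1 - (m : ℝ) * p) ^ r) ^ (1 / r))
          = deriv (deriv (fun p : ℝ => ((m : ℝ) * p ^ r + (1 - (m : ℝ) * p) ^ r) ^ (1 / r)))
          from rfl, h]
      have h1 : (0:ℝ) < x ^ (r-2) := Real.rpow_pos_of_pos (hp_pos x hx') _
      have h2 : (0:ℝ) < (1 - (m:ℝ)*x) ^ (r-2) := Real.rpow_pos_of_pos (hb_pos x hx') _
      have h3 : (0:ℝ) < ((m:ℝ) * x ^ r + (1 - (m:ℝ)*x) ^ r) ^ (1/r - 2) :=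
        Real.rpow_pos_of_pos (hg_pos x hx') _
      have : 0 < r - 1 := by linarith
      positivity
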